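/- Let Υ and Ω be two row-strict composition tableaux of the same shape β (a composition of m ≤ n, content [m̄, n] with m̄ = n−m+1), and let j_Υ, j_Ω denote the indices of the rows containing the minimal entry m̄ in Υ and Ω respectively. Then exactly one of the following holds: (1) (m̄, j_Ω) is a Springer inversion of Υ; (2) (m̄, j_Υ) is a Springer inversion of Ω; (3) j_Υ = j_Ω. -/

import Mathlib

open Finset

/-- The content interval `[n-m+1, n]` of a shifted tableau. -/
def content (n m : ℕ) : Finset ℕ := Finset.Icc (n - m + 1) n

lemma content_mono (n m : ℕ) : content n (m - 1) ⊆ content n m := by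
  intro x hx
  simp only [content, Finset.mem_Icc] at *
  omega

/-- A (shifted) row-strict composition tableau of shape `β` (a weak composition of `m` with
`k` parts) and content `[n-m+1, n]`, encoded by the assignment of each entry to its row.
(The filling of each row is determined by its set of entries, since entries strictly decrease
from left to right in each row.) -/
abbrev RSCT (n m k : ℕ) (β : Fin k → ℕ) : Type :=
  {row : {i : ℕ // i ∈ content n m} → Fin k //
    ∀ j : Fin k, (Finset.univ.filter fun i => row i = j).card = β j}

/-- The (0-indexed) column of entry `i`: the number of larger entries in its own row. -/
def colOf {n m k : ℕ} {β : Fin k → ℕ} (T : RSCT n m k β)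
    (i : {a : ℕ // a ∈ content n m}) : ℕ :=
  (Finset.univ.filter fun i' : {a : ℕ // a ∈ content n m} =>
    T.val i' = T.val i ∧ (i : ℕ) < (i' : ℕ)).card

/-- `(i, j)` is a Springer inversion of `T`: there is an entry `i' > i` in row `j` that is
either directly above `i` in the same column, or in a column strictly to the right of the
column of `i`. -/
def isInv {n m k : ℕ} {β : Fin k → ℕ} (T : RSCT n m k β) (i : ℕ) (j : Fin k) : Prop :=
  ∃ (hi : i ∈ content n m) (i' : {a : ℕ // a ∈ content n m}),
    T.val i' = j ∧ i < (i' : ℕ) ∧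
      (colOf T ⟨i, hi⟩ < colOf T i' ∨
        (colOf T i' = colOf T ⟨i, hi⟩ ∧ j < T.val ⟨i, hi⟩))

/-- The finite set of Springer inversions of `T`. -/
noncomputable def InvF {n m k : ℕ} {β : Fin k → ℕ} (T : RSCT n m k β) :
    Finset (ℕ × Fin k) :=
  @Finset.filter (ℕ × Fin k) (fun p => isInv T p.1 p.2) (Classical.decPred _)
    ((content n m) ×ˢ (Finset.univ : Finset (Fin k)))

/-- The inversion vector of `T`: `invVec T i` is the number of Springer inversions of `T`
with first coordinate `i`. -/
noncomputable def invVec {n m k : ℕ} {β : Fin k → ℕ} (T : RSCT n m k β) (i : ℕ) : ℕ :=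
  ((InvF T).filter fun p => p.1 = i).card

/-- `etaRel T T'` expresses that `T'` is obtained from `T` by removing the box containing
the minimal entry `n - m + 1` (which lies at the end of its row). -/
def etaRel {n m k : ℕ} {β β' : Fin k → ℕ} (T : RSCT n m k β)
    (T' : RSCT n (m - 1) k β') : Prop :=
  (∃ h : n - m + 1 ∈ content n m,
      β' = Function.update β (T.val ⟨n - m + 1, h⟩) (β (T.val ⟨n - m + 1, h⟩) - 1)) ∧
  ∀ (i : ℕ) (hi : i ∈ content n (m - 1)),
      T'.val ⟨i, hi⟩ = T.val ⟨i, content_mono n m hi⟩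

section aux
variable {n m k : ℕ} {β : Fin k → ℕ}

lemma aux_colOf_lt (T : RSCT n m k β) (i : {a : ℕ // a ∈ content n m}) :
    colOf T i < β (T.val i) := by
  rw [← T.2 (T.val i)]
  apply Finset.card_lt_card
  refine ⟨fun x hx => ?_, fun hsub => ?_⟩
  · simp only [Finset.mem_filter, Finset.mem_univ, true_and] at hx ⊢
    exact hx.1
  · have := hsub (by simp : i ∈ Finset.univ.filter fun i' => T.val i' = T.val i)
    simp [colOf] at this

lemma aux_colOf_lt_of_lt (T : RSCT n m k β) (i₁ i₂ : {a : ℕ // a ∈ content n m})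
    (hrow : T.val i₁ = T.val i₂) (hlt : (i₁ : ℕ) < (i₂ : ℕ)) :
    colOf T i₂ < colOf T i₁ := by
  apply Finset.card_lt_card
  refine ⟨fun x hx => ?_, fun hsub => ?_⟩
  · simp only [Finset.mem_filter, Finset.mem_univ, true_and] at hx ⊢
    exact ⟨hx.1.trans hrow.symm, hlt.trans hx.2⟩
  · have := hsub (by
      simp only [Finset.mem_filter, Finset.mem_univ, true_and]
      exact ⟨hrow.symm, hlt⟩ :
      i₂ ∈ Finset.univ.filter fun i' => T.val i' = T.val i₁ ∧ (i₁ : ℕ) < (i' : ℕ))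
    simp at this

lemma aux_colOf_surj (T : RSCT n m k β) (j : Fin k) (c : ℕ) (hc : c < β j) :
    ∃ i' : {a : ℕ // a ∈ content n m}, T.val i' = j ∧ colOf T i' = c := by
  have hsurj := Finset.surj_on_of_inj_on_of_card_le
    (s := Finset.univ.filter fun i : {a : ℕ // a ∈ content n m} => T.val i = j)
    (t := Finset.range (β j))
    (fun i _ => colOf T i)
    (fun i hi => by
      simp only [Finset.mem_filter] at hi
      simpa [Finset.mem_range, hi.2] using aux_colOf_lt T i)
    (fun i₁ i₂ h₁ h₂ heq => by
      simp only [Finset.mem_filter] at h₁ h₂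
      by_contra hne
      have hvne : (i₁ : ℕ) ≠ (i₂ : ℕ) := fun h => hne (Subtype.ext h)
      rcases hvne.lt_or_gt with h | h
      · exact absurd heq (aux_colOf_lt_of_lt T i₁ i₂ (h₁.2.trans h₂.2.symm) h).ne'
      · exact absurd heq (aux_colOf_lt_of_lt T i₂ i₁ (h₂.2.trans h₁.2.symm) h).ne)
    (by rw [T.2 j, Finset.card_range])
  obtain ⟨i, hi, hci⟩ := hsurj c (Finset.mem_range.mpr hc)
  exact ⟨i, (Finset.mem_filter.mp hi).2, hci.symm⟩

lemma aux_min_le (i : {a : ℕ // a ∈ content n m}) : n - m + 1 ≤ (i : ℕ) := by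
  have := i.2
  simp only [content, Finset.mem_Icc] at this
  exact this.1

lemma aux_colOf_min (T : RSCT n m k β) (h : n - m + 1 ∈ content n m) :
    colOf T ⟨n - m + 1, h⟩ = β (T.val ⟨n - m + 1, h⟩) - 1 := by
  set j := T.val ⟨n - m + 1, h⟩
  have hset : (Finset.univ.filter fun i' : {a : ℕ // a ∈ content n m} =>
      T.val i' = j ∧ (n - m + 1 : ℕ) < (i' : ℕ)) =
      (Finset.univ.filter fun i' : {a : ℕ // a ∈ content n m} => T.val i' = j)
        \ {⟨n - m + 1, h⟩} := by
    ext i'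
    simp only [Finset.mem_filter, Finset.mem_univ, true_and, Finset.mem_sdiff,
      Finset.mem_singleton]
    constructor
    · rintro ⟨h1, h2⟩
      exact ⟨h1, fun he => by simp [he] at h2⟩
    · rintro ⟨h1, h2⟩
      refine ⟨h1, lt_of_le_of_ne (aux_min_le i') fun he => h2 (Subtype.ext he.symm)⟩
  rw [colOf, hset, Finset.card_sdiff_of_subset (by simp [j]), T.2 j, Finset.card_singleton]

lemma aux_not_inv_self (T : RSCT n m k β) (h : n - m + 1 ∈ content n m) :
    ¬ isInv T (n - m + 1) (T.val ⟨n - m + 1, h⟩) := by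
  rintro ⟨hi, i', hrow, hlt, hcase⟩
  have hc : colOf T i' < β (T.val ⟨n - m + 1, h⟩) := hrow ▸ aux_colOf_lt T i'
  have hmin : colOf T ⟨n - m + 1, hi⟩ = β (T.val ⟨n - m + 1, h⟩) - 1 :=
    aux_colOf_min T hi
  have hβ : 1 ≤ β (T.val ⟨n - m + 1, h⟩) := by
    rw [← T.2 (T.val ⟨n - m + 1, h⟩)]
    exact Finset.card_pos.mpr ⟨⟨n - m + 1, h⟩, by simp⟩
  rcases hcase with hc' | ⟨_, hc'⟩
  · omega
  · exact absurd hc' (lt_irrefl _)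

lemma aux_inv_iff (T : RSCT n m k β) (h : n - m + 1 ∈ content n m) (j : Fin k)
    (hj1 : 1 ≤ β j) (hne : j ≠ T.val ⟨n - m + 1, h⟩) :
    isInv T (n - m + 1) j ↔
      (β (T.val ⟨n - m + 1, h⟩) < β j ∨
        (β j = β (T.val ⟨n - m + 1, h⟩) ∧ j < T.val ⟨n - m + 1, h⟩)) := by
  set jT := T.val ⟨n - m + 1, h⟩ with hjT
  have hβT : 1 ≤ β jT := by
    rw [← T.2 jT]
    exact Finset.card_pos.mpr ⟨⟨n - m + 1, h⟩, by simp [hjT]⟩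
  have hmin : colOf T ⟨n - m + 1, h⟩ = β jT - 1 := aux_colOf_min T h
  constructor
  · rintro ⟨hi, i', hrow, hlt, hcase⟩
    have hc : colOf T i' < β j := hrow ▸ aux_colOf_lt T i'
    have hmin' : colOf T ⟨n - m + 1, hi⟩ = β jT - 1 := aux_colOf_min T hi
    rcases hcase with hc' | ⟨hc', hj⟩
    · left; omega
    · rcases lt_or_eq_of_le (show β jT ≤ β j by omega) with h' | h'
      · exact Or.inl h'
      · exact Or.inr ⟨h'.symm, hj⟩
  · rintro (h' | ⟨h', hj⟩)
    · obtain ⟨i', hrow, hci⟩ := aux_colOf_surj T j (β j - 1) (by omega)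
      refine ⟨h, i', hrow, ?_, Or.inl (by omega)⟩
      refine lt_of_le_of_ne (aux_min_le i') fun he => hne ?_
      rw [← hrow, (Subtype.ext he.symm : i' = ⟨n - m + 1, h⟩)]
    · obtain ⟨i', hrow, hci⟩ := aux_colOf_surj T j (β jT - 1) (by omega)
      refine ⟨h, i', hrow, ?_, Or.inr ⟨by omega, hj⟩⟩
      refine lt_of_le_of_ne (aux_min_le i') fun he => hne ?_
      rw [← hrow, (Subtype.ext he.symm : i' = ⟨n - m + 1, h⟩)]

end aux

/-- trichotomy lemma.  Let `Υ, Ω` be row-strict composition tableaux of the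
same shape `β` (a composition of `m ≤ n`, content `[m̄, n]` with `m̄ = n - m + 1`), and let
`j_Υ, j_Ω` be the rows containing the minimal entry `m̄` in `Υ` and `Ω`.  Then exactly one of
the following holds: (1) `(m̄, j_Ω)` is a Springer inversion of `Υ`; (2) `(m̄, j_Υ)` is a
Springer inversion of `Ω`; (3) `j_Υ = j_Ω`. -/
theorem stmt1 (n m k : ℕ) (hm1 : 1 ≤ m) (hmn : m ≤ n) (β : Fin k → ℕ)
    (hsum : ∑ j, β j = m) (Υ Ω : RSCT n m k β)
    (jU jO : Fin k)
    (hjU : jU = Υ.val ⟨n - m + 1, by simp only [content, Finset.mem_Icc]; omega⟩)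
    (hjO : jO = Ω.val ⟨n - m + 1, by simp only [content, Finset.mem_Icc]; omega⟩) :
    (isInv Υ (n - m + 1) jO ∧ ¬ isInv Ω (n - m + 1) jU ∧ jU ≠ jO) ∨
    (¬ isInv Υ (n - m + 1) jO ∧ isInv Ω (n - m + 1) jU ∧ jU ≠ jO) ∨
    (¬ isInv Υ (n - m + 1) jO ∧ ¬ isInv Ω (n - m + 1) jU ∧ jU = jO) := by
  have h : n - m + 1 ∈ content n m := by simp only [content, Finset.mem_Icc]; omega
  have hjU' : jU = Υ.val ⟨n - m + 1, h⟩ := hjU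
  have hjO' : jO = Ω.val ⟨n - m + 1, h⟩ := hjO
  have hβU : 1 ≤ β jU := by
    rw [hjU', ← Υ.2 (Υ.val ⟨n - m + 1, h⟩)]
    exact Finset.card_pos.mpr ⟨⟨n - m + 1, h⟩, by simp⟩
  have hβO : 1 ≤ β jO := by
    rw [hjO', ← Ω.2 (Ω.val ⟨n - m + 1, h⟩)]
    exact Finset.card_pos.mpr ⟨⟨n - m + 1, h⟩, by simp⟩
  by_cases heq : jU = jO
  · refine Or.inr (Or.inr ⟨?_, ?_, heq⟩)
    · have := aux_not_inv_self Υ h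
      rwa [← hjU', heq] at this
    · have := aux_not_inv_self Ω h
      rwa [← hjO', ← heq] at this
  · have hU := aux_inv_iff Υ h jO hβO (by rw [← hjU']; exact Ne.symm heq)
    have hO := aux_inv_iff Ω h jU hβU (by rw [← hjO']; exact heq)
    rw [← hjU'] at hU
    rw [← hjO'] at hO
    rcases lt_trichotomy (β jU) (β jO) with hβ | hβ | hβ
    · refine Or.inl ⟨hU.mpr (Or.inl hβ), fun hinv => ?_, heq⟩
      rcases hO.mp hinv with h' | ⟨h', _⟩ <;> omega
    · rcases lt_trichotomy jU jO with hj | hj | hj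
      · refine Or.inr (Or.inl ⟨fun hinv => ?_, hO.mpr (Or.inr ⟨hβ, hj⟩), heq⟩)
        rcases hU.mp hinv with h' | ⟨_, h'⟩
        · omega
        · exact absurd h' (lt_asymm hj)
      · exact absurd hj heq
      · refine Or.inl ⟨hU.mpr (Or.inr ⟨hβ.symm, hj⟩), fun hinv => ?_, heq⟩
        rcases hO.mp hinv with h' | ⟨_, h'⟩
        · omega
        · exact absurd h' (lt_asymm hj)
    · refine Or.inr (Or.inl ⟨fun hinv => ?_, hO.mpr (Or.inl hβ), heq⟩)
      rcases hU.mp hinv with h' | ⟨h', _⟩ <;> omega
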